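/- Let n ≥ 1 be a natural number, and let A : ℝ → Matrix n n ℝ be continuously differentiable (entrywise) with A(ρ) symmetric for every ρ. Let λ_min(ρ) denote the smallest eigenvalue of A(ρ). Suppose A′(ρ) + A(ρ)² = 1 + E(ρ) with each E(ρ) symmetric and of operator norm ‖E(ρ)‖ ≤ K·e^{−αρ} for constants K > 0, α > 0. Then at every point ρ₀ where λ_min is differentiable, |λ_min′(ρ₀) + λ_min(ρ₀)² − 1| ≤ K·e^{−αρ₀}. -/

import Mathlib

open scoped Matrix.Norms.L2Operator
open Matrix

private theorem rayleigh_aux (n : ℕ) (hn : 1 ≤ n) (B : Matrix (Fin n) (Fin n) ℝ)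
    (hB : B.IsHermitian) (x : Fin n → ℝ) (hx : x ⬝ᵥ x = 1) :
    (⨅ i, hB.eigenvalues i) ≤ x ⬝ᵥ (B *ᵥ x) := by
  have hne : Nonempty (Fin n) := ⟨⟨0, hn⟩⟩
  set U : Matrix (Fin n) (Fin n) ℝ := (hB.eigenvectorUnitary : Matrix (Fin n) (Fin n) ℝ) with hU
  have hUU : U * star U = 1 := (Matrix.mem_unitaryGroup_iff).mp hB.eigenvectorUnitary.2
  set w : Fin n → ℝ := star U *ᵥ x with hw
  have hxU : x ᵥ* U = w := by
    rw [hw]; ext j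
    simp [Matrix.vecMul, Matrix.mulVec, dotProduct, Matrix.star_eq_conjTranspose,
      Matrix.conjTranspose_apply, mul_comm]
  have key : x ⬝ᵥ (B *ᵥ x) = ∑ i, hB.eigenvalues i * (w i)^2 := by
    conv_lhs => rw [hB.spectral_theorem]
    rw [Unitary.conjStarAlgAut_apply, ← hU, ← Matrix.mulVec_mulVec, ← Matrix.mulVec_mulVec, Matrix.dotProduct_mulVec, hxU]
    simp [dotProduct, Matrix.mulVec_diagonal]
    ring_nf
    exact Finset.sum_congr rfl fun i _ => by rw [← hw]; ring
  have h2 : U *ᵥ w = x := by rw [hw, Matrix.mulVec_mulVec, hUU, Matrix.one_mulVec]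
  have hww : ∑ i, (w i)^2 = 1 := by
    have h3 : w ⬝ᵥ w = 1 := by
      calc w ⬝ᵥ w = (x ᵥ* U) ⬝ᵥ w := by rw [hxU]
        _ = x ⬝ᵥ (U *ᵥ w) := (Matrix.dotProduct_mulVec x U w).symm
        _ = x ⬝ᵥ x := by rw [h2]
        _ = 1 := hx
    simpa [dotProduct, pow_two] using h3
  rw [key]
  calc (⨅ i, hB.eigenvalues i) = ∑ i, (⨅ j, hB.eigenvalues j) * (w i)^2 := by
        rw [← Finset.mul_sum, hww, mul_one]
    _ ≤ ∑ i, hB.eigenvalues i * (w i)^2 := by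
        apply Finset.sum_le_sum
        intro i _
        exact mul_le_mul_of_nonneg_right (ciInf_le (Set.Finite.bddBelow (Set.finite_range _)) i)
          (sq_nonneg _)

/-- **Equation (2.6) in the proof of Lemma 2.4.** If `A : ℝ → Sym(n,ℝ)` is continuously
differentiable with `A' + A² = 1 + E` and `‖E ρ‖ ≤ K·exp(-αρ)`, then the smallest
eigenvalue `λ_min` of `A` satisfies `|λ_min' + λ_min² - 1| ≤ K·exp(-αρ₀)` at every
point `ρ₀` where it is differentiable. -/
theorem lambda_min_riccati (n : ℕ) (hn : 1 ≤ n) (K α : ℝ) (hK : 0 < K) (hα : 0 < α)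
    (A A' E : ℝ → Matrix (Fin n) (Fin n) ℝ)
    (hA : ∀ ρ, (A ρ).IsHermitian)
    (hderiv : ∀ ρ, ∀ i j, HasDerivAt (fun t => A t i j) (A' ρ i j) ρ)
    (hcont : ∀ i j, Continuous fun ρ => A' ρ i j)
    (hEsymm : ∀ ρ, (E ρ).IsHermitian)
    (heq : ∀ ρ, A' ρ + (A ρ)^2 = 1 + E ρ)
    (hEnorm : ∀ ρ, ‖E ρ‖ ≤ K * Real.exp (-α * ρ))
    (lmin : ℝ → ℝ) (hlmin : ∀ ρ, lmin ρ = ⨅ i, (hA ρ).eigenvalues i)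
    (ρ₀ : ℝ) (hdiff : DifferentiableAt ℝ lmin ρ₀) :
    |deriv lmin ρ₀ + (lmin ρ₀)^2 - 1| ≤ K * Real.exp (-α * ρ₀) := by
  have hne : Nonempty (Fin n) := ⟨⟨0, hn⟩⟩
  -- pick an index attaining the minimum
  obtain ⟨i₀, hi₀⟩ : ∃ i₀, ∀ j, (hA ρ₀).eigenvalues i₀ ≤ (hA ρ₀).eigenvalues j :=
    Finite.exists_min _
  have hlmin₀ : lmin ρ₀ = (hA ρ₀).eigenvalues i₀ := by
    rw [hlmin]
    exact le_antisymm (ciInf_le (Set.Finite.bddBelow (Set.finite_range _)) i₀) (le_ciInf hi₀)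
  set V : Fin n → ℝ := ⇑((hA ρ₀).eigenvectorBasis i₀) with hV
  have hmul : A ρ₀ *ᵥ V = (hA ρ₀).eigenvalues i₀ • V := (hA ρ₀).mulVec_eigenvectorBasis i₀
  have hVnorm : ‖(hA ρ₀).eigenvectorBasis i₀‖ = 1 := (hA ρ₀).eigenvectorBasis.orthonormal.1 i₀
  have hVV : V ⬝ᵥ V = 1 := by
    have h1 : (inner ℝ ((hA ρ₀).eigenvectorBasis i₀) ((hA ρ₀).eigenvectorBasis i₀) : ℝ) = 1 := by
      rw [real_inner_self_eq_norm_sq, hVnorm]; norm_num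
    simp only [PiLp.inner_apply, RCLike.inner_apply, conj_trivial] at h1
    simpa [dotProduct, mul_comm] using h1
  -- the Rayleigh quotient function
  set f : ℝ → ℝ := fun ρ => ∑ i, ∑ j, V i * (A ρ i j * V j) with hf
  have hfeq : ∀ ρ, f ρ = V ⬝ᵥ (A ρ *ᵥ V) := by
    intro ρ
    simp [hf, dotProduct, Matrix.mulVec, Finset.mul_sum]
  have hfd : HasDerivAt f (∑ i, ∑ j, V i * (A' ρ₀ i j * V j)) ρ₀ :=
    HasDerivAt.fun_sum fun i _ => HasDerivAt.fun_sum fun j _ =>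
      ((hderiv ρ₀ i j).mul_const (V j)).const_mul (V i)
  have hfd' : deriv f ρ₀ = V ⬝ᵥ (A' ρ₀ *ᵥ V) := by
    rw [hfd.deriv]
    simp [dotProduct, Matrix.mulVec, Finset.mul_sum]
  -- f ρ₀ = lmin ρ₀
  have hf0 : f ρ₀ = lmin ρ₀ := by
    rw [hfeq, hmul, dotProduct_smul, smul_eq_mul, hVV, mul_one, hlmin₀]
  -- f ≥ lmin everywhere
  have hfl : ∀ ρ, lmin ρ ≤ f ρ := by
    intro ρ
    rw [hfeq, hlmin]
    exact rayleigh_aux n hn (A ρ) (hA ρ) V hVV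
  -- local min of f - lmin at ρ₀, so derivatives agree
  have hglm : IsLocalMin (fun ρ => f ρ - lmin ρ) ρ₀ :=
    Filter.Eventually.of_forall fun ρ => by
      simp only [hf0, sub_self]
      linarith [hfl ρ]
  have hgd : deriv (fun ρ => f ρ - lmin ρ) ρ₀ = 0 := hglm.deriv_eq_zero
  have hderiv_eq : deriv lmin ρ₀ = V ⬝ᵥ (A' ρ₀ *ᵥ V) := by
    rw [deriv_fun_sub hfd.differentiableAt hdiff] at hgd
    rw [← hfd']
    linarith
  -- compute V ⬝ᵥ (A' ρ₀ *ᵥ V)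
  have hA'eq : A' ρ₀ = 1 + E ρ₀ - (A ρ₀)^2 := eq_sub_of_add_eq (heq ρ₀)
  have hsq : V ⬝ᵥ ((A ρ₀)^2 *ᵥ V) = (lmin ρ₀)^2 := by
    rw [pow_two, ← Matrix.mulVec_mulVec, hmul, Matrix.mulVec_smul, hmul,
      dotProduct_smul, dotProduct_smul, smul_eq_mul, smul_eq_mul, hVV, hlmin₀]
    ring
  have hEq2 : V ⬝ᵥ (A' ρ₀ *ᵥ V) = 1 + V ⬝ᵥ (E ρ₀ *ᵥ V) - (lmin ρ₀)^2 := by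
    rw [hA'eq, Matrix.sub_mulVec, Matrix.add_mulVec, dotProduct_sub,
      dotProduct_add, Matrix.one_mulVec, hVV, hsq]
  -- the error term bound
  have hbound : |V ⬝ᵥ (E ρ₀ *ᵥ V)| ≤ ‖E ρ₀‖ := by
    set v : EuclideanSpace ℝ (Fin n) := (hA ρ₀).eigenvectorBasis i₀ with hv
    set y : EuclideanSpace ℝ (Fin n) := (EuclideanSpace.equiv (Fin n) ℝ).symm (E ρ₀ *ᵥ V) with hy
    have h1 : V ⬝ᵥ (E ρ₀ *ᵥ V) = (inner ℝ v y : ℝ) := by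
      simp [hy, PiLp.inner_apply, dotProduct, RCLike.inner_apply, EuclideanSpace.equiv,
        mul_comm, hV, hv]
    have h2 : ‖y‖ ≤ ‖E ρ₀‖ * ‖v‖ := (E ρ₀).l2_opNorm_mulVec v
    rw [hVnorm] at h2
    rw [h1]
    calc |(inner ℝ v y : ℝ)| ≤ ‖v‖ * ‖y‖ := abs_real_inner_le_norm v y
      _ ≤ 1 * (‖E ρ₀‖ * 1) := by
          rw [hVnorm]
          exact mul_le_mul_of_nonneg_left (by simpa using h2) zero_le_one
      _ = ‖E ρ₀‖ := by ring
  have : deriv lmin ρ₀ + (lmin ρ₀)^2 - 1 = V ⬝ᵥ (E ρ₀ *ᵥ V) := by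
    rw [hderiv_eq, hEq2]; ring
  rw [this]
  exact hbound.trans (hEnorm ρ₀)
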